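/- Shortest unique suffix of a unique substring with repeating left part is a MUS: let W = W[1..n] and 1 ≤ a ≤ b ≤ n be such that W[a..b] is unique in W and W[a..b−1] is repeating in W. Let ℓ be the largest index in [a..b] such that W[ℓ..b] is unique in W (ℓ exists since ℓ = a qualifies). Then [ℓ..b] ∈ MUS(W). -/
import Mathlib


variable {α : Type*}

/-- `occursAt T S p`: the string `S` occurs at the 1-based position `p` in `T`,
i.e. `1 ≤ p ≤ |T| − |S| + 1` and `T[p..p+|S|−1] = S`. -/
def occursAt (T S : List α) (p : ℕ) : Prop :=
  1 ≤ p ∧ p + S.length ≤ T.length + 1 ∧ (T.drop (p - 1)).take S.length = S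

/-- `#occ_T(S)`: the number of positions at which `S` occurs in `T`. -/
noncomputable def occCount (T S : List α) : ℕ :=
  {p : ℕ | occursAt T S p}.ncard

/-- `sub T i ℓ = T[i..i+ℓ−1]` (1-based substring of length `ℓ` starting at `i`). -/
def sub (T : List α) (i ℓ : ℕ) : List α := (T.drop (i - 1)).take ℓ

/-- Longest previous factor array (1-based): `LPF T i` is the largest `ℓ ≥ 0` such that
the prefix `T[i..i+ℓ−1]` of `T[i..n]` also occurs at some position `j < i` in `T`. -/
noncomputable def LPF (T : List α) (i : ℕ) : ℕ :=
  @Nat.findGreatest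
    (fun ℓ => (i - 1) + ℓ ≤ T.length ∧ ∃ j, 1 ≤ j ∧ j < i ∧ occursAt T (sub T i ℓ) j)
    (Classical.decPred _) T.length

/-- Longest repeating suffix array (1-based): `LRS T i` is the length of the longest
suffix of `T[1..i]` occurring at least twice in `T[1..i]`. -/
noncomputable def LRS (T : List α) (i : ℕ) : ℕ :=
  @Nat.findGreatest
    (fun ℓ => 2 ≤ occCount (T.take i) ((T.take i).drop (i - ℓ)))
    (Classical.decPred _) i

/-- `MUS T`: the set of (1-based) intervals `[s..t] ⊆ [1..n]` such that `T[s..t]` is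
unique in `T` while `T[s+1..t]` and `T[s..t−1]` are repeating in `T`. -/
def MUS (T : List α) : Set (ℕ × ℕ) :=
  {st | 1 ≤ st.1 ∧ st.1 ≤ st.2 ∧ st.2 ≤ T.length ∧
    occCount T (sub T st.1 (st.2 - st.1 + 1)) = 1 ∧
    2 ≤ occCount T (sub T (st.1 + 1) (st.2 - st.1)) ∧
    2 ≤ occCount T (sub T st.1 (st.2 - st.1))}

lemma occ_finite (T S : List α) : {p | occursAt T S p}.Finite := by
  apply (Set.finite_Icc 1 (T.length + 1)).subset
  rintro p ⟨h1, h2, _⟩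
  exact ⟨h1, le_trans (Nat.le_add_right _ _) h2⟩

lemma occCount_nil (T : List α) : occCount T ([] : List α) = T.length + 1 := by
  have : {p | occursAt T ([] : List α) p} = Set.Icc 1 (T.length + 1) := by
    ext p; simp [occursAt]
  rw [occCount, this, ← Finset.coe_Icc, Set.ncard_coe_finset, Nat.card_Icc]; omega

lemma occursAt_append (T X S : List α) (p : ℕ) (h : occursAt T (X ++ S) p) :
    occursAt T S (p + X.length) := by
  obtain ⟨h1, h2, h3⟩ := h
  refine ⟨le_trans h1 (Nat.le_add_right _ _), by simp at h2 ⊢; omega, ?_⟩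
  have := congrArg (List.drop X.length) h3
  rw [List.drop_take, List.drop_drop, List.drop_append_of_le_length (by simp)] at this
  simp at this
  rw [show p + X.length - 1 = p - 1 + X.length by omega]
  exact this

lemma occCount_append_le (T X S : List α) : occCount T (X ++ S) ≤ occCount T S := by
  exact Set.ncard_le_ncard_of_injOn (fun p => p + X.length)
    (fun p hp => occursAt_append T X S p hp)
    (fun p _ q _ h => by simpa using h) (occ_finite T S)

lemma occursAt_sub (T : List α) (i len : ℕ) (hi : 1 ≤ i) (hlen : i - 1 + len ≤ T.length) :
    occursAt T (sub T i len) i := by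
  have hl : (sub T i len).length = len := by simp [sub]; omega
  exact ⟨hi, by omega, by rw [hl]; rfl⟩

lemma one_le_occCount (T : List α) (i len : ℕ) (hi : 1 ≤ i) (hlen : i - 1 + len ≤ T.length) :
    1 ≤ occCount T (sub T i len) := by
  rw [occCount, Nat.one_le_iff_ne_zero, Ne, Set.ncard_eq_zero (occ_finite T _)]
  exact Set.nonempty_iff_ne_empty.mp ⟨i, occursAt_sub T i len hi hlen⟩

lemma sub_split (T : List α) (a ℓ b : ℕ) (ha : 1 ≤ a) (h1 : a ≤ ℓ) (h2 : ℓ ≤ b) :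
    sub T a (b - a) = sub T a (ℓ - a) ++ sub T ℓ (b - ℓ) := by
  unfold sub
  rw [show b - a = (ℓ - a) + (b - ℓ) by omega, List.take_add,
    List.drop_drop, show a - 1 + (ℓ - a) = ℓ - 1 by omega]


/-- shortest unique suffix of a unique substring with repeating left part
is a MUS: if `W[a..b]` is unique in `W`, `W[a..b−1]` is repeating in `W`, and `ℓ` is the
largest index in `[a..b]` such that `W[ℓ..b]` is unique in `W`, then `[ℓ..b] ∈ MUS(W)`. -/
theorem shortest_unique_suffix_is_mus (W : List α) (a b ℓ : ℕ)
    (ha : 1 ≤ a) (hab : a ≤ b) (hb : b ≤ W.length)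
    (huniq : occCount W (sub W a (b - a + 1)) = 1)
    (hrep : 2 ≤ occCount W (sub W a (b - a)))
    (hℓ1 : a ≤ ℓ) (hℓ2 : ℓ ≤ b)
    (hu : occCount W (sub W ℓ (b - ℓ + 1)) = 1)
    (hmax : ∀ ℓ', ℓ < ℓ' → ℓ' ≤ b → occCount W (sub W ℓ' (b - ℓ' + 1)) ≠ 1) :
    (ℓ, b) ∈ MUS W := by
  simp only [MUS, Set.mem_setOf_eq]
  refine ⟨le_trans ha hℓ1, hℓ2, hb, hu, ?_, ?_⟩
  · rcases eq_or_lt_of_le hℓ2 with heq | hlt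
    · subst heq
      have h0 : sub W (ℓ + 1) (ℓ - ℓ) = ([] : List α) := by simp [sub]
      rw [h0, occCount_nil]; omega
    · have h1 : occCount W (sub W (ℓ + 1) (b - (ℓ + 1) + 1)) ≠ 1 :=
        hmax (ℓ + 1) (by omega) (by omega)
      have h2 : 1 ≤ occCount W (sub W (ℓ + 1) (b - ℓ)) :=
        one_le_occCount W (ℓ + 1) (b - ℓ) (by omega) (by omega)
      rw [show b - (ℓ + 1) + 1 = b - ℓ by omega] at h1
      omega
  · calc 2 ≤ occCount W (sub W a (b - a)) := hrep
      _ = occCount W (sub W a (ℓ - a) ++ sub W ℓ (b - ℓ)) := by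
          rw [← sub_split W a ℓ b ha hℓ1 hℓ2]
      _ ≤ occCount W (sub W ℓ (b - ℓ)) := occCount_append_le W _ _
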